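/- Let ν be a probability measure on ℝⁿ, Y ~ ν, and suppose that for random vectors X₀ ~ ν_{K₀}, X₁ ~ ν_{K₁} (normalized restrictions of ν to compact sets K₀, K₁) there is a coupling (X₀,X₁) with exp(−D((1−t)X₀+tX₁‖Y)/n) ≥ (1−t)exp(−D(X₀‖Y)/n) + t·exp(−D(X₁‖Y)/n). Then ν((1−t)K₀+tK₁)^{1/n} ≥ (1−t)ν(K₀)^{1/n} + t·ν(K₁)^{1/n}. -/

import Mathlib

open MeasureTheory Pointwise Classical
open scoped ENNReal

/-- Relative entropy `D(μ‖ν)`, valued in `EReal`, set to `+∞` when `μ` is not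
absolutely continuous with respect to `ν` or the log-likelihood ratio is not integrable. -/
noncomputable def relEnt {α : Type*} [MeasurableSpace α] (μ ν : Measure α) : EReal :=
  if μ ≪ ν ∧ Integrable (llr μ ν) μ then ((∫ x, llr μ ν x ∂μ : ℝ) : EReal) else ⊤

/-- `e^{-D/n}`, with the convention `e^{-∞} = 0`. -/
noncomputable def expNegDiv (D : EReal) (n : ℝ) : ℝ :=
  if D = ⊤ then 0 else Real.exp (-D.toReal / n)


-- (a) relEnt of normalized restriction
lemma aux_relEnt_restrict {α : Type*} [MeasurableSpace α] (ν : Measure α) [IsProbabilityMeasure ν]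
    {K : Set α} (hK : MeasurableSet K) (h0 : 0 < ν K) :
    relEnt ((ν K)⁻¹ • ν.restrict K) ν = ((-Real.log (ν K).toReal : ℝ) : EReal) := by
  set c : ℝ≥0∞ := (ν K)⁻¹ with hc
  set μ := c • ν.restrict K with hμ
  have hKtop : ν K ≠ ⊤ := measure_ne_top ν K
  have hc0 : c ≠ 0 := by simp [hc, hKtop]
  have hctop : c ≠ ⊤ := by simp [hc, h0.ne']
  have hprob : IsProbabilityMeasure μ := by
    constructor
    rw [hμ]
    simp only [Measure.smul_apply, Measure.restrict_apply MeasurableSet.univ, Set.univ_inter,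
      smul_eq_mul]
    exact ENNReal.inv_mul_cancel h0.ne' hKtop
  have hac : μ ≪ ν := by
    intro s hs
    have h1 : ν.restrict K s = 0 := Measure.restrict_le_self.absolutelyContinuous hs
    rw [hμ]
    simp [Measure.smul_apply, h1]
  -- a.e. value of llr
  have hrn : μ.rnDeriv ν =ᵐ[ν] c • K.indicator (1 : α → ℝ≥0∞) := by
    have h1 := Measure.rnDeriv_smul_left_of_ne_top (ν.restrict K) ν hctop
    have h2 := Measure.rnDeriv_restrict_self ν hK
    filter_upwards [h1, h2] with x hx1 hx2
    rw [hμ]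
    rw [hx1]; simp [hx2]
  have hμK : μ Kᶜ = 0 := by
    rw [hμ]
    simp [Measure.restrict_apply hK.compl]
  have hllr : llr μ ν =ᵐ[μ] fun _ => -Real.log (ν K).toReal := by
    have hmem : ∀ᵐ x ∂μ, x ∈ K := by
      have h := (measure_eq_zero_iff_ae_notMem (μ := μ) (s := Kᶜ)).mp hμK
      filter_upwards [h] with x hx
      simpa using hx
    filter_upwards [hac.ae_le hrn, hmem] with x hx hxK
    rw [llr, hx]
    simp only [Pi.smul_apply, Set.indicator_of_mem hxK, Pi.one_apply, smul_eq_mul, mul_one]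
    rw [hc, ENNReal.toReal_inv, Real.log_inv]
  have hint : Integrable (llr μ ν) μ :=
    (integrable_const (-Real.log (ν K).toReal)).congr hllr.symm
  have hI : ∫ x, llr μ ν x ∂μ = -Real.log (ν K).toReal := by
    rw [integral_congr_ae hllr]
    simp
  rw [relEnt, if_pos ⟨hac, hint⟩, hI]

-- (b) lower bound on relative entropy via support
lemma aux_llr_lower {α : Type*} [MeasurableSpace α] (μ ν : Measure α)
    [IsProbabilityMeasure μ] [IsProbabilityMeasure ν]
    (hμν : μ ≪ ν) (hint : Integrable (llr μ ν) μ)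
    {S : Set α} (hS : MeasurableSet S) (hμS : μ Sᶜ = 0) :
    -Real.log (ν S).toReal ≤ ∫ x, llr μ ν x ∂μ := by
  have hνS : 0 < ν S := by
    by_contra h
    push_neg at h
    have : ν S = 0 := le_antisymm h zero_le
    have hμS' : μ S = 0 := hμν this
    have h1 : μ Set.univ = 0 := by
      rw [← Set.union_compl_self S]
      exact measure_union_null hμS' hμS
    simp [measure_univ] at h1
  set c : ℝ := (ν S).toReal with hcdef
  have hc : 0 < c := ENNReal.toReal_pos hνS.ne' (measure_ne_top ν S)
  -- integral of exp(-llr) is at most c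
  have hexp_eq : (fun x => Real.exp (-llr μ ν x)) =ᵐ[μ] fun x => (ν.rnDeriv μ x).toReal :=
    exp_neg_llr hμν
  have hexp_int : Integrable (fun x => Real.exp (-llr μ ν x)) μ :=
    (Measure.integrable_toReal_rnDeriv).congr hexp_eq.symm
  have hrestr : μ.restrict S = μ := by
    apply Measure.restrict_eq_self_of_ae_mem
    have h := (measure_eq_zero_iff_ae_notMem (μ := μ) (s := Sᶜ)).mp hμS
    filter_upwards [h] with x hx
    simpa using hx
  have hIexp : ∫ x, Real.exp (-llr μ ν x) ∂μ ≤ c := by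
    rw [integral_congr_ae hexp_eq]
    calc ∫ x, (ν.rnDeriv μ x).toReal ∂μ = ∫ x in S, (ν.rnDeriv μ x).toReal ∂μ := by
          rw [hrestr]
      _ ≤ (ν S).toReal := Measure.setIntegral_toReal_rnDeriv_le (measure_ne_top ν S)
  -- pointwise bound
  have hpt : ∀ x, 1 - Real.exp (-llr μ ν x) / c ≤ llr μ ν x + Real.log c := by
    intro x
    have h := Real.add_one_le_exp (-(llr μ ν x + Real.log c))
    have he : Real.exp (-(llr μ ν x + Real.log c)) = Real.exp (-llr μ ν x) / c := by
      rw [neg_add, Real.exp_add, Real.exp_neg (Real.log c), Real.exp_log hc, div_eq_mul_inv]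
    rw [he] at h
    linarith
  have hlhs_int : Integrable (fun x => 1 - Real.exp (-llr μ ν x) / c) μ :=
    (integrable_const (1:ℝ)).sub (hexp_int.div_const c)
  have hrhs_int : Integrable (fun x => llr μ ν x + Real.log c) μ :=
    hint.add (integrable_const _)
  have hmono := integral_mono hlhs_int hrhs_int hpt
  rw [integral_sub (integrable_const _) (hexp_int.div_const c), integral_add hint
    (integrable_const _), integral_const, integral_const, integral_div] at hmono
  simp only [measure_univ, ENNReal.toReal_one, probReal_univ, smul_eq_mul, one_mul] at hmono
  have hdiv : (∫ x, Real.exp (-llr μ ν x) ∂μ) / c ≤ 1 := by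
    rw [div_le_one hc]; exact hIexp
  linarith

lemma aux_expNegDiv_log {r m : ℝ} (hr : 0 < r) :
    expNegDiv ((-Real.log r : ℝ) : EReal) m = r ^ ((1:ℝ)/m) := by
  rw [expNegDiv, if_neg (EReal.coe_ne_top _), EReal.toReal_coe, neg_neg,
    Real.rpow_def_of_pos hr, mul_one_div]

theorem stmt_15 {n : ℕ} (hn : 0 < n)
    (ν : Measure (EuclideanSpace ℝ (Fin n))) [IsProbabilityMeasure ν]
    (K₀ K₁ : Set (EuclideanSpace ℝ (Fin n)))
    (hK₀ : IsCompact K₀) (hK₁ : IsCompact K₁)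
    (hν₀ : 0 < ν K₀) (hν₁ : 0 < ν K₁)
    (t : ℝ) (ht : t ∈ Set.Icc (0 : ℝ) 1)
    (νK₀ νK₁ : Measure (EuclideanSpace ℝ (Fin n)))
    (hνK₀ : νK₀ = (ν K₀)⁻¹ • ν.restrict K₀) (hνK₁ : νK₁ = (ν K₁)⁻¹ • ν.restrict K₁)
    (hcoupling : ∃ π : Measure (EuclideanSpace ℝ (Fin n) × EuclideanSpace ℝ (Fin n)),
      IsProbabilityMeasure π ∧ π.map Prod.fst = νK₀ ∧ π.map Prod.snd = νK₁ ∧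
        expNegDiv (relEnt (π.map fun p => (1 - t) • p.1 + t • p.2) ν) n ≥
          (1 - t) * expNegDiv (relEnt νK₀ ν) n + t * expNegDiv (relEnt νK₁ ν) n) :
    (ν ((1 - t) • K₀ + t • K₁)).toReal ^ ((1 : ℝ) / n) ≥
      (1 - t) * (ν K₀).toReal ^ ((1 : ℝ) / n) + t * (ν K₁).toReal ^ ((1 : ℝ) / n) := by
  rw [ge_iff_le]
  set S : Set (EuclideanSpace ℝ (Fin n)) := (1 - t) • K₀ + t • K₁ with hSdef
  set f : EuclideanSpace ℝ (Fin n) × EuclideanSpace ℝ (Fin n) → EuclideanSpace ℝ (Fin n) :=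
    fun p => (1 - t) • p.1 + t • p.2 with hfdef
  have hmK₀ : MeasurableSet K₀ := hK₀.isClosed.measurableSet
  have hmK₁ : MeasurableSet K₁ := hK₁.isClosed.measurableSet
  have hf_cont : Continuous f := by
    apply Continuous.add
    · exact (continuous_fst.const_smul (1 - t))
    · exact (continuous_snd.const_smul t)
  have hf_meas : Measurable f := hf_cont.measurable
  have hSeq : S = f '' (K₀ ×ˢ K₁) := by
    ext x
    simp only [hSdef, Set.mem_add, Set.mem_smul_set, Set.mem_image, Set.mem_prod, Prod.exists,
      hfdef]
    constructor
    · rintro ⟨a, ⟨u, hu, rfl⟩, b, ⟨v, hv, rfl⟩, rfl⟩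
      exact ⟨u, v, ⟨hu, hv⟩, rfl⟩
    · rintro ⟨u, v, ⟨hu, hv⟩, rfl⟩
      exact ⟨_, ⟨u, hu, rfl⟩, _, ⟨v, hv, rfl⟩, rfl⟩
  have hScomp : IsCompact S := hSeq ▸ (hK₀.prod hK₁).image hf_cont
  have hmS : MeasurableSet S := hScomp.isClosed.measurableSet
  obtain ⟨π, hπ, hfst, hsnd, hineq⟩ := hcoupling
  set μt : Measure (EuclideanSpace ℝ (Fin n)) := π.map f with hμtdef
  haveI hμt_prob : IsProbabilityMeasure μt := Measure.isProbabilityMeasure_map hf_meas.aemeasurable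
  -- the pushforward is supported on S
  have hπK : π ((K₀ ×ˢ K₁)ᶜ) = 0 := by
    have h0 : π (Prod.fst ⁻¹' K₀ᶜ) = 0 := by
      have := Measure.map_apply (measurable_fst :
        Measurable (Prod.fst : (EuclideanSpace ℝ (Fin n)) × (EuclideanSpace ℝ (Fin n)) → EuclideanSpace ℝ (Fin n))) hmK₀.compl (μ := π)
      rw [hfst] at this
      rw [← this, hνK₀]
      simp [Measure.restrict_apply hmK₀.compl]
    have h1 : π (Prod.snd ⁻¹' K₁ᶜ) = 0 := by
      have := Measure.map_apply (measurable_snd :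
        Measurable (Prod.snd : (EuclideanSpace ℝ (Fin n)) × (EuclideanSpace ℝ (Fin n)) → EuclideanSpace ℝ (Fin n))) hmK₁.compl (μ := π)
      rw [hsnd] at this
      rw [← this, hνK₁]
      simp [Measure.restrict_apply hmK₁.compl]
    refine measure_mono_null ?_ (measure_union_null h0 h1)
    intro p hp
    simp only [Set.mem_compl_iff, Set.mem_prod, not_and_or] at hp
    simpa using hp
  have hμtS : μt Sᶜ = 0 := by
    rw [hμtdef, Measure.map_apply hf_meas hmS.compl]
    refine measure_mono_null ?_ hπK
    intro p hp
    simp only [Set.mem_preimage, Set.mem_compl_iff] at hp ⊢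
    intro hmem
    exact hp (hSeq ▸ Set.mem_image_of_mem f hmem)
  -- values of the restricted entropies
  haveI : IsProbabilityMeasure νK₀ := by
    constructor
    rw [hνK₀]
    simp only [Measure.smul_apply, Measure.restrict_apply MeasurableSet.univ, Set.univ_inter,
      smul_eq_mul]
    exact ENNReal.inv_mul_cancel hν₀.ne' (measure_ne_top ν K₀)
  have hE0 : expNegDiv (relEnt νK₀ ν) n = (ν K₀).toReal ^ ((1:ℝ)/n) := by
    rw [hνK₀, aux_relEnt_restrict ν hmK₀ hν₀,
      aux_expNegDiv_log (ENNReal.toReal_pos hν₀.ne' (measure_ne_top ν K₀))]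
  have hE1 : expNegDiv (relEnt νK₁ ν) n = (ν K₁).toReal ^ ((1:ℝ)/n) := by
    rw [hνK₁, aux_relEnt_restrict ν hmK₁ hν₁,
      aux_expNegDiv_log (ENNReal.toReal_pos hν₁.ne' (measure_ne_top ν K₁))]
  -- the pushforward entropy bound
  have hupper : expNegDiv (relEnt μt ν) n ≤ (ν S).toReal ^ ((1:ℝ)/n) := by
    by_cases hAC : μt ≪ ν ∧ Integrable (llr μt ν) μt
    · obtain ⟨hac, hintg⟩ := hAC
      have hνS : 0 < ν S := by
        by_contra h
        push_neg at h
        have h0 : ν S = 0 := le_antisymm h zero_le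
        have hμS' : μt S = 0 := hac h0
        have h1 : μt Set.univ = 0 := by
          rw [← Set.union_compl_self S]
          exact measure_union_null hμS' hμtS
        simp [measure_univ] at h1
      have hlow : -Real.log (ν S).toReal ≤ ∫ x, llr μt ν x ∂μt :=
        aux_llr_lower μt ν hac hintg hmS hμtS
      rw [relEnt, if_pos ⟨hac, hintg⟩, expNegDiv, if_neg (EReal.coe_ne_top _), EReal.toReal_coe,
        Real.rpow_def_of_pos (ENNReal.toReal_pos hνS.ne' (measure_ne_top ν S)), mul_one_div]
      apply Real.exp_le_exp.mpr
      have hn' : (0:ℝ) < n := by exact_mod_cast hn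
      have hnum : -(∫ x, llr μt ν x ∂μt) ≤ Real.log (ν S).toReal := by linarith
      gcongr
    · rw [relEnt, if_neg hAC, expNegDiv, if_pos rfl]
      positivity
  calc (1 - t) * (ν K₀).toReal ^ ((1 : ℝ) / n) + t * (ν K₁).toReal ^ ((1 : ℝ) / n)
      = (1 - t) * expNegDiv (relEnt νK₀ ν) n + t * expNegDiv (relEnt νK₁ ν) n := by
        rw [hE0, hE1]
    _ ≤ expNegDiv (relEnt μt ν) n := hineq
    _ ≤ (ν S).toReal ^ ((1:ℝ)/n) := hupper
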